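/- The subgroup ₀Γ'₂ = Γ'₂ ∩ Sp(4,ℤ) has index 3 in Γ'₂, and the three matrices 1 (the identity), S₂ (the matrix equal to the identity except that its (2,4) entry is 1/2), and J₂ (the matrix with rows (0,0,−1,0), (0,0,0,−1/2), (1,0,0,0), (0,2,0,0)) form a complete system of representatives for the left cosets ₀Γ'₂\Γ'₂. -/

import Mathlib

open Matrix

noncomputable section

abbrev M4 : Type := Matrix (Fin 4) (Fin 4) ℚ

def Jmat : M4 := !![0,0,1,0; 0,0,0,1; -1,0,0,0; 0,-1,0,0]

/-- Exponent pattern of the paramodular group `Γ_t`: the `(i,j)` entry of an element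
lies in `t^(pexp i j) ℤ`. -/
def pexp : Matrix (Fin 4) (Fin 4) ℤ := !![0,0,0,1; 1,0,1,1; 0,0,0,1; 0,-1,0,0]

lemma pexp_triangle : ∀ i k j : Fin 4, pexp i j ≤ pexp i k + pexp k j := by decide

lemma pexp_diag : ∀ i : Fin 4, pexp i i = 0 := by decide

def rho : Fin 4 → Fin 4 := ![2,3,0,1]
def sgn : Fin 4 → ℤ := ![1,1,-1,-1]
def tgn : Fin 4 → ℤ := ![-1,-1,1,1]

lemma pexp_rho : ∀ i j : Fin 4, pexp (rho j) (rho i) = pexp i j := by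
  intro i j; fin_cases i <;> fin_cases j <;> rfl

lemma Jmat_mul_Jmat : Jmat * Jmat = -1 := by
  ext i j
  fin_cases i <;> fin_cases j <;>
    simp [Jmat, Matrix.mul_apply, Fin.sum_univ_four, Matrix.one_apply, Matrix.vecHead, Matrix.vecTail]

lemma sympl_form_inv (g : GL (Fin 4) ℚ) (hg : (g : M4)ᵀ * Jmat * (g : M4) = Jmat) :
    ((g⁻¹ : GL (Fin 4) ℚ) : M4) = -(Jmat * (g : M4)ᵀ * Jmat) := by
  have h1 : (-(Jmat * (g : M4)ᵀ * Jmat)) * (g : M4) = 1 := by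
    have h2 : (-(Jmat * (g : M4)ᵀ * Jmat)) * (g : M4) =
        -(Jmat * ((g : M4)ᵀ * Jmat * (g : M4))) := by noncomm_ring
    rw [h2, hg, Jmat_mul_Jmat]
    simp
  calc ((g⁻¹ : GL (Fin 4) ℚ) : M4) = 1 * ((g⁻¹ : GL (Fin 4) ℚ) : M4) := (one_mul _).symm
    _ = ((-(Jmat * (g : M4)ᵀ * Jmat)) * (g : M4)) * ((g⁻¹ : GL (Fin 4) ℚ) : M4) := by rw [h1]
    _ = (-(Jmat * (g : M4)ᵀ * Jmat)) * ((g : M4) * ((g⁻¹ : GL (Fin 4) ℚ) : M4)) := by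
        rw [mul_assoc]
    _ = -(Jmat * (g : M4)ᵀ * Jmat) := by rw [Units.mul_inv]; rw [mul_one]

lemma inv_entry (g : GL (Fin 4) ℚ) (hg : (g : M4)ᵀ * Jmat * (g : M4) = Jmat) (i j : Fin 4) :
    ((g⁻¹ : GL (Fin 4) ℚ) : M4) i j =
      -((sgn i : ℚ) * (tgn j : ℚ) * (g : M4) (rho j) (rho i)) := by
  rw [sympl_form_inv g hg]
  fin_cases i <;> fin_cases j <;>
    simp [Jmat, rho, sgn, tgn, Matrix.mul_apply, Fin.sum_univ_four, Matrix.vecHead,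
      Matrix.vecTail, Matrix.vecMul, dotProduct]

/-- A rational matrix has integer entries. -/
def IntM (A : M4) : Prop := ∀ i j, ∃ n : ℤ, A i j = (n : ℚ)

lemma IntM.mul {A B : M4} (hA : IntM A) (hB : IntM B) : IntM (A * B) := by
  intro i j
  have key : ∀ k, ∃ n : ℤ, A i k * B k j = (n : ℚ) := fun k => by
    obtain ⟨p, hp⟩ := hA i k
    obtain ⟨q, hq⟩ := hB k j
    exact ⟨p * q, by rw [hp, hq]; push_cast; ring⟩
  choose f hf using key
  refine ⟨∑ k, f k, ?_⟩
  rw [Matrix.mul_apply, Finset.sum_congr rfl (fun k _ => hf k)]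
  push_cast
  rfl

lemma IntM.transpose {A : M4} (hA : IntM A) : IntM Aᵀ := fun i j => hA j i

lemma IntM.neg {A : M4} (hA : IntM A) : IntM (-A) := fun i j => by
  obtain ⟨n, hn⟩ := hA i j
  exact ⟨-n, by rw [Matrix.neg_apply, hn]; push_cast; ring⟩

lemma IntM.one : IntM 1 := fun i j => by
  by_cases h : i = j
  · exact ⟨1, by simp [Matrix.one_apply, h]⟩
  · exact ⟨0, by simp [Matrix.one_apply, h]⟩

def JmatZ : Matrix (Fin 4) (Fin 4) ℤ := !![0,0,1,0; 0,0,0,1; -1,0,0,0; 0,-1,0,0]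

lemma Jmat_eq_map : Jmat = JmatZ.map (Int.cast : ℤ → ℚ) := by
  ext i j
  fin_cases i <;> fin_cases j <;> simp [Jmat, JmatZ, Matrix.vecHead, Matrix.vecTail]

lemma IntM.Jmat : IntM Jmat := fun i j =>
  ⟨JmatZ i j, by rw [Jmat_eq_map]; simp [Matrix.map_apply]⟩

/-- `Sp(4,ℤ)`: the subgroup of `GL(4,ℚ)` of integer matrices `g` with `gᵀ J g = J`. -/
def Sp4Z : Subgroup (GL (Fin 4) ℚ) where
  carrier := {g | IntM (g : M4) ∧ (g : M4)ᵀ * Jmat * (g : M4) = Jmat}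
  one_mem' := ⟨by rw [Units.val_one]; exact IntM.one, by simp⟩
  mul_mem' := by
    rintro a b ⟨hai, haf⟩ ⟨hbi, hbf⟩
    constructor
    · rw [Units.val_mul]; exact hai.mul hbi
    · rw [Units.val_mul, transpose_mul]
      calc (b : M4)ᵀ * (a : M4)ᵀ * Jmat * ((a : M4) * (b : M4))
          = (b : M4)ᵀ * ((a : M4)ᵀ * Jmat * (a : M4)) * (b : M4) := by noncomm_ring
        _ = Jmat := by rw [haf, hbf]
  inv_mem' := by
    rintro a ⟨hai, haf⟩
    constructor
    · rw [sympl_form_inv a haf]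
      exact (((IntM.Jmat.mul hai.transpose).mul IntM.Jmat)).neg
    · have h1 : ((a : M4) * ((a⁻¹ : GL (Fin 4) ℚ) : M4)) = 1 := Units.mul_inv a
      calc ((a⁻¹ : GL (Fin 4) ℚ) : M4)ᵀ * Jmat * ((a⁻¹ : GL (Fin 4) ℚ) : M4)
          = ((a⁻¹ : GL (Fin 4) ℚ) : M4)ᵀ * ((a : M4)ᵀ * Jmat * (a : M4)) *
              ((a⁻¹ : GL (Fin 4) ℚ) : M4) := by rw [haf]
        _ = ((a : M4) * ((a⁻¹ : GL (Fin 4) ℚ) : M4))ᵀ * Jmat *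
              ((a : M4) * ((a⁻¹ : GL (Fin 4) ℚ) : M4)) := by
            rw [transpose_mul]; noncomm_ring
        _ = Jmat := by rw [h1]; simp

/-- The paramodular group `Γ_t`: the subgroup of `Sp(4,ℚ)` of matrices whose entries are
integers except possibly the `(4,2)` entry, which lies in `t⁻¹ℤ`, and whose entries at
positions `(1,4)`, `(2,1)`, `(2,3)`, `(2,4)`, `(3,4)` lie in `tℤ`. -/
def Gamma (t : ℕ) (ht : t ≠ 0) : Subgroup (GL (Fin 4) ℚ) where
  carrier := {g | (g : M4)ᵀ * Jmat * (g : M4) = Jmat ∧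
    ∀ i j, ∃ n : ℤ, (g : M4) i j = (n : ℚ) * (t : ℚ) ^ (pexp i j)}
  one_mem' := by
    constructor
    · simp
    · intro i j
      by_cases hij : i = j
      · subst hij
        exact ⟨1, by simp [Units.val_one, Matrix.one_apply, pexp_diag]⟩
      · exact ⟨0, by simp [Units.val_one, Matrix.one_apply, hij]⟩
  mul_mem' := by
    rintro a b ⟨haf, hap⟩ ⟨hbf, hbp⟩
    have htq : (t : ℚ) ≠ 0 := Nat.cast_ne_zero.mpr ht
    constructor
    · rw [Units.val_mul, transpose_mul]
      calc (b : M4)ᵀ * (a : M4)ᵀ * Jmat * ((a : M4) * (b : M4))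
          = (b : M4)ᵀ * ((a : M4)ᵀ * Jmat * (a : M4)) * (b : M4) := by noncomm_ring
        _ = Jmat := by rw [haf, hbf]
    · intro i j
      have key : ∀ k : Fin 4, ∃ n : ℤ,
          (a : M4) i k * (b : M4) k j = (n : ℚ) * (t : ℚ) ^ (pexp i j) := by
        intro k
        obtain ⟨p, hp⟩ := hap i k
        obtain ⟨q, hq⟩ := hbp k j
        refine ⟨p * q * (t : ℤ) ^ (pexp i k + pexp k j - pexp i j).toNat, ?_⟩
        have hd : (0 : ℤ) ≤ pexp i k + pexp k j - pexp i j := by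
          have := pexp_triangle i k j; omega
        have hcast : ((p * q * (t : ℤ) ^ (pexp i k + pexp k j - pexp i j).toNat : ℤ) : ℚ)
            = (p : ℚ) * (q : ℚ) * (t : ℚ) ^ (pexp i k + pexp k j - pexp i j) := by
          push_cast
          rw [← zpow_natCast (t : ℚ), Int.toNat_of_nonneg hd]
        have hpow : (t : ℚ) ^ (pexp i k + pexp k j - pexp i j) * (t : ℚ) ^ (pexp i j)
            = (t : ℚ) ^ (pexp i k) * (t : ℚ) ^ (pexp k j) := by
          rw [← zpow_add₀ htq, ← zpow_add₀ htq]
          congr 1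
          ring
        rw [hp, hq, hcast, mul_assoc ((p : ℚ) * (q : ℚ)), hpow]
        ring
      choose f hf using key
      refine ⟨∑ k, f k, ?_⟩
      rw [Units.val_mul, Matrix.mul_apply, Finset.sum_congr rfl (fun k _ => hf k),
        ← Finset.sum_mul]
      push_cast
      ring
  inv_mem' := by
    rintro a ⟨haf, hap⟩
    refine ⟨?_, ?_⟩
    · have h1 : ((a : M4) * ((a⁻¹ : GL (Fin 4) ℚ) : M4)) = 1 := Units.mul_inv a
      calc ((a⁻¹ : GL (Fin 4) ℚ) : M4)ᵀ * Jmat * ((a⁻¹ : GL (Fin 4) ℚ) : M4)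
          = ((a⁻¹ : GL (Fin 4) ℚ) : M4)ᵀ * ((a : M4)ᵀ * Jmat * (a : M4)) *
              ((a⁻¹ : GL (Fin 4) ℚ) : M4) := by rw [haf]
        _ = ((a : M4) * ((a⁻¹ : GL (Fin 4) ℚ) : M4))ᵀ * Jmat *
              ((a : M4) * ((a⁻¹ : GL (Fin 4) ℚ) : M4)) := by
            rw [transpose_mul]; noncomm_ring
        _ = Jmat := by rw [h1]; simp
    · intro i j
      obtain ⟨n, hn⟩ := hap (rho j) (rho i)
      refine ⟨-(sgn i * tgn j * n), ?_⟩
      rw [inv_entry a haf i j, hn, ← pexp_rho i j]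
      push_cast
      ring

/-- The matrix `I_t = diag(1, t⁻¹, 1, t)` as an element of `GL(4,ℚ)`. -/
def It (t : ℕ) (ht : t ≠ 0) : GL (Fin 4) ℚ where
  val := diagonal ![1, (t : ℚ)⁻¹, 1, (t : ℚ)]
  inv := diagonal ![1, (t : ℚ), 1, (t : ℚ)⁻¹]
  val_inv := by
    have htq : (t : ℚ) ≠ 0 := Nat.cast_ne_zero.mpr ht
    rw [diagonal_mul_diagonal]
    ext i j
    fin_cases i <;> fin_cases j <;>
      simp [Matrix.diagonal_apply, Matrix.one_apply, Matrix.vecHead, Matrix.vecTail,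
        inv_mul_cancel₀ htq, mul_inv_cancel₀ htq]
  inv_val := by
    have htq : (t : ℚ) ≠ 0 := Nat.cast_ne_zero.mpr ht
    rw [diagonal_mul_diagonal]
    ext i j
    fin_cases i <;> fin_cases j <;>
      simp [Matrix.diagonal_apply, Matrix.one_apply, Matrix.vecHead, Matrix.vecTail,
        inv_mul_cancel₀ htq, mul_inv_cancel₀ htq]

/-- The conjugated paramodular group `Γ'_t = I_t Γ_t I_t⁻¹`. -/
def Gamma' (t : ℕ) (ht : t ≠ 0) : Subgroup (GL (Fin 4) ℚ) :=
  (Gamma t ht).map (MulAut.conj (It t ht)).toMonoidHom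

/-- The matrix `S₂`: the identity except that its `(2,4)` entry is `1/2`. -/
def S2 : GL (Fin 4) ℚ where
  val := !![1,0,0,0; 0,1,0,1/2; 0,0,1,0; 0,0,0,1]
  inv := !![1,0,0,0; 0,1,0,-(1/2); 0,0,1,0; 0,0,0,1]
  val_inv := by
    ext i j
    fin_cases i <;> fin_cases j <;>
      simp [Matrix.mul_apply, Fin.sum_univ_four, Matrix.one_apply, Matrix.vecHead,
        Matrix.vecTail] <;> norm_num
  inv_val := by
    ext i j
    fin_cases i <;> fin_cases j <;>
      simp [Matrix.mul_apply, Fin.sum_univ_four, Matrix.one_apply, Matrix.vecHead,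
        Matrix.vecTail] <;> norm_num

/-- The matrix `J₂` with rows `(0,0,-1,0)`, `(0,0,0,-1/2)`, `(1,0,0,0)`, `(0,2,0,0)`. -/
def J2 : GL (Fin 4) ℚ where
  val := !![0,0,-1,0; 0,0,0,-(1/2); 1,0,0,0; 0,2,0,0]
  inv := !![0,0,1,0; 0,0,0,1/2; -1,0,0,0; 0,-2,0,0]
  val_inv := by
    ext i j
    fin_cases i <;> fin_cases j <;>
      simp [Matrix.mul_apply, Fin.sum_univ_four, Matrix.one_apply, Matrix.vecHead,
        Matrix.vecTail] <;> norm_num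
  inv_val := by
    ext i j
    fin_cases i <;> fin_cases j <;>
      simp [Matrix.mul_apply, Fin.sum_univ_four, Matrix.one_apply, Matrix.vecHead,
        Matrix.vecTail] <;> norm_num

lemma two_ne : (2:ℕ) ≠ 0 := by norm_num

def qexp : Matrix (Fin 4) (Fin 4) ℤ := !![0,1,0,0; 0,0,0,-1; 0,1,0,0; 1,1,1,0]

lemma mem_gamma'_iff (g : GL (Fin 4) ℚ) :
    g ∈ Gamma' 2 two_ne ↔ ((g : M4)ᵀ * Jmat * (g : M4) = Jmat ∧
      ∀ i j, ∃ n : ℤ, (g : M4) i j = (n : ℚ) * 2 ^ (qexp i j)) := by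
  rw [Gamma', Subgroup.mem_map_equiv]
  simp only [MulAut.conj_symm_apply]
  set E : M4 := diagonal ![1, (2:ℚ), 1, (2:ℚ)⁻¹] with hE
  set D : M4 := diagonal ![1, (2:ℚ)⁻¹, 1, (2:ℚ)] with hD
  have hval : (((It 2 two_ne)⁻¹ * g * It 2 two_ne : GL (Fin 4) ℚ) : M4) = E * (g : M4) * D := by
    rw [Units.val_mul, Units.val_mul]
    norm_num [It, hE, hD]
  have hDJD : Dᵀ * Jmat * D = Jmat := by
    ext i j
    fin_cases i <;> fin_cases j <;>
      norm_num [hD, Jmat, Matrix.mul_apply, Fin.sum_univ_four, Matrix.diagonal_apply]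
  have hEJE : Eᵀ * Jmat * E = Jmat := by
    ext i j
    fin_cases i <;> fin_cases j <;>
      norm_num [hE, Jmat, Matrix.mul_apply, Fin.sum_univ_four, Matrix.diagonal_apply]
  have hDE : D * E = 1 := by
    rw [hD, hE, diagonal_mul_diagonal]
    ext i j
    fin_cases i <;> fin_cases j <;> norm_num [Matrix.diagonal_apply, Matrix.one_apply]
  have hsymp_iff : ((E * (g : M4) * D)ᵀ * Jmat * (E * (g : M4) * D) = Jmat) ↔
      ((g : M4)ᵀ * Jmat * (g : M4) = Jmat) := by
    have expand : (E * (g : M4) * D)ᵀ * Jmat * (E * (g : M4) * D)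
        = Dᵀ * ((g : M4)ᵀ * (Eᵀ * Jmat * E) * (g : M4)) * D := by
      simp only [transpose_mul]; noncomm_ring
    rw [expand, hEJE]
    constructor
    · intro h
      have h2 : Eᵀ * (Dᵀ * ((g:M4)ᵀ * Jmat * (g:M4)) * D) * E = Eᵀ * Jmat * E := by rw [h]
      rw [hEJE] at h2
      have h3 : Eᵀ * (Dᵀ * ((g:M4)ᵀ * Jmat * (g:M4)) * D) * E
          = (D * E)ᵀ * ((g:M4)ᵀ * Jmat * (g:M4)) * (D * E) := by
        simp only [transpose_mul]; noncomm_ring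
      rw [h3, hDE] at h2
      simpa using h2
    · intro h; rw [h, hDJD]
  have hpt : ∀ i j, (∃ n : ℤ, (E * (g : M4) * D) i j = (n:ℚ) * 2 ^ (pexp i j)) ↔
      (∃ n : ℤ, (g : M4) i j = (n:ℚ) * 2 ^ (qexp i j)) := by
    intro i j
    fin_cases i <;> fin_cases j <;>
      (constructor <;> rintro ⟨n, hn⟩ <;> refine ⟨n, ?_⟩ <;>
        norm_num [hE, hD, pexp, qexp, Matrix.mul_diagonal, Matrix.diagonal_mul] at hn ⊢ <;>
        linarith)
  have hent_iff : (∀ i j, ∃ n : ℤ, (E * (g : M4) * D) i j = (n:ℚ) * 2 ^ (pexp i j)) ↔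
      (∀ i j, ∃ n : ℤ, (g : M4) i j = (n:ℚ) * 2 ^ (qexp i j)) :=
    ⟨fun H i j => (hpt i j).mp (H i j), fun H i j => (hpt i j).mpr (H i j)⟩
  constructor
  · rintro ⟨h1, h2⟩
    rw [hval] at h1 h2
    exact ⟨hsymp_iff.mp h1, hent_iff.mp h2⟩
  · rintro ⟨h1, h2⟩
    refine ⟨?_, ?_⟩ <;> rw [hval]
    · exact hsymp_iff.mpr h1
    · exact hent_iff.mpr h2

lemma qexp_diag : ∀ i : Fin 4, qexp i i = 0 := by decide

lemma int_of_pow (x : ℚ) (A e : ℤ) (h : x = (A:ℚ) * (2:ℚ)^e) (he : 0 ≤ e) : ∃ n : ℤ, x = (n:ℚ) :=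
  ⟨A * 2^(e.toNat), by rw [h]; push_cast; rw [← zpow_natCast ((2:ℚ)) e.toNat, Int.toNat_of_nonneg he]⟩

lemma one_mem_gamma' : (1 : GL (Fin 4) ℚ) ∈ Gamma' 2 two_ne := by
  rw [mem_gamma'_iff]
  refine ⟨by simp, fun i j => ?_⟩
  by_cases h : i = j
  · subst h
    exact ⟨1, by rw [Units.val_one, Matrix.one_apply_eq, qexp_diag]; norm_num⟩
  · exact ⟨0, by rw [Units.val_one, Matrix.one_apply_ne h]; norm_num⟩

lemma S2_mem_gamma' : S2 ∈ Gamma' 2 two_ne := by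
  rw [mem_gamma'_iff]
  constructor
  · ext i j
    fin_cases i <;> fin_cases j <;>
      simp [S2, Jmat, Matrix.mul_apply, Fin.sum_univ_four, Matrix.transpose_apply,
        Matrix.vecHead, Matrix.vecTail]
  · intro i j
    fin_cases i <;> fin_cases j
    · exact ⟨1, by norm_num [S2, qexp]⟩
    · exact ⟨0, by norm_num [S2, qexp]⟩
    · exact ⟨0, by norm_num [S2, qexp]⟩
    · exact ⟨0, by norm_num [S2, qexp]⟩
    · exact ⟨0, by norm_num [S2, qexp]⟩
    · exact ⟨1, by norm_num [S2, qexp]⟩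
    · exact ⟨0, by norm_num [S2, qexp]⟩
    · exact ⟨1, by norm_num [S2, qexp]⟩
    · exact ⟨0, by norm_num [S2, qexp]⟩
    · exact ⟨0, by norm_num [S2, qexp]⟩
    · exact ⟨1, by norm_num [S2, qexp]⟩
    · exact ⟨0, by norm_num [S2, qexp]⟩
    · exact ⟨0, by norm_num [S2, qexp]⟩
    · exact ⟨0, by norm_num [S2, qexp]⟩
    · exact ⟨0, by norm_num [S2, qexp]⟩
    · exact ⟨1, by norm_num [S2, qexp]⟩

lemma J2_mem_gamma' : J2 ∈ Gamma' 2 two_ne := by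
  rw [mem_gamma'_iff]
  constructor
  · ext i j
    fin_cases i <;> fin_cases j <;>
      simp [J2, Jmat, Matrix.mul_apply, Fin.sum_univ_four, Matrix.transpose_apply,
        Matrix.vecHead, Matrix.vecTail]
  · intro i j
    fin_cases i <;> fin_cases j
    · exact ⟨0, by norm_num [J2, qexp]⟩
    · exact ⟨0, by norm_num [J2, qexp]⟩
    · exact ⟨-1, by norm_num [J2, qexp]⟩
    · exact ⟨0, by norm_num [J2, qexp]⟩
    · exact ⟨0, by norm_num [J2, qexp]⟩
    · exact ⟨0, by norm_num [J2, qexp]⟩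
    · exact ⟨0, by norm_num [J2, qexp]⟩
    · exact ⟨-1, by norm_num [J2, qexp]⟩
    · exact ⟨1, by norm_num [J2, qexp]⟩
    · exact ⟨0, by norm_num [J2, qexp]⟩
    · exact ⟨0, by norm_num [J2, qexp]⟩
    · exact ⟨0, by norm_num [J2, qexp]⟩
    · exact ⟨0, by norm_num [J2, qexp]⟩
    · exact ⟨1, by norm_num [J2, qexp]⟩
    · exact ⟨0, by norm_num [J2, qexp]⟩
    · exact ⟨0, by norm_num [J2, qexp]⟩

lemma symp_row (g : GL (Fin 4) ℚ) (h : (g:M4)ᵀ * Jmat * (g:M4) = Jmat) :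
    (g:M4) * Jmat * (g:M4)ᵀ = Jmat := by
  have hinv := sympl_form_inv g h
  have h1 : (g:M4) * (-(Jmat * (g:M4)ᵀ * Jmat)) = 1 := by
    rw [← hinv]; exact Units.mul_inv g
  have h3 : (g:M4) * Jmat * (g:M4)ᵀ * Jmat = -(1:M4) := by
    have h2 : -((g:M4) * Jmat * (g:M4)ᵀ * Jmat) = 1 := by rw [← h1]; noncomm_ring
    rw [neg_eq_iff_eq_neg] at h2
    exact h2
  have hJ : Jmat * (-Jmat) = 1 := by rw [mul_neg, Jmat_mul_Jmat]; simp
  calc (g:M4) * Jmat * (g:M4)ᵀ = (g:M4) * Jmat * (g:M4)ᵀ * (Jmat * (-Jmat)) := by rw [hJ, mul_one]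
    _ = ((g:M4) * Jmat * (g:M4)ᵀ * Jmat) * (-Jmat) := by noncomm_ring
    _ = -(1:M4) * (-Jmat) := by rw [h3]
    _ = Jmat := by simp

lemma sp4z_intM {x : GL (Fin 4) ℚ} (h : x ∈ Sp4Z) : IntM (x : M4) := h.1

lemma mem_inf_helper {g r : GL (Fin 4) ℚ} (hg : g ∈ Gamma' 2 two_ne) (hr : r ∈ Gamma' 2 two_ne)
    (hI : IntM ((g * r⁻¹ : GL (Fin 4) ℚ) : M4)) : g * r⁻¹ ∈ Gamma' 2 two_ne ⊓ Sp4Z := by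
  have hm : g * r⁻¹ ∈ Gamma' 2 two_ne := mul_mem hg (inv_mem hr)
  exact Subgroup.mem_inf.mpr ⟨hm, ⟨hI, ((mem_gamma'_iff _).mp hm).1⟩⟩

lemma qcase : ∀ i j : Fin 4, 0 ≤ qexp i j ∨ (i = 1 ∧ j = 3) := by
  intro i j; fin_cases i <;> fin_cases j <;> simp [qexp]

lemma fin4_cases (i : Fin 4) : i = 0 ∨ i = 1 ∨ i = 2 ∨ i = 3 := by fin_cases i <;> simp

lemma exists_unique_rep (g : GL (Fin 4) ℚ) (hg : g ∈ Gamma' 2 two_ne) :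
    ∃! r : GL (Fin 4) ℚ, (r = 1 ∨ r = S2 ∨ r = J2) ∧
      g * r⁻¹ ∈ Gamma' 2 two_ne ⊓ Sp4Z := by
  obtain ⟨hsymp, hent⟩ := (mem_gamma'_iff g).mp hg
  choose A hA using hent
  have e01 : (g:M4) 0 1 = 2 * (A 0 1 : ℚ) := by
    rw [hA 0 1, show qexp 0 1 = 1 by decide]; norm_num <;> ring
  have e10 : (g:M4) 1 0 = (A 1 0 : ℚ) := by
    rw [hA 1 0, show qexp 1 0 = 0 by decide]; norm_num
  have e11 : (g:M4) 1 1 = (A 1 1 : ℚ) := by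
    rw [hA 1 1, show qexp 1 1 = 0 by decide]; norm_num
  have e12 : (g:M4) 1 2 = (A 1 2 : ℚ) := by
    rw [hA 1 2, show qexp 1 2 = 0 by decide]; norm_num
  have e13 : (g:M4) 1 3 = (A 1 3 : ℚ) / 2 := by
    rw [hA 1 3, show qexp 1 3 = -1 by decide]; norm_num <;> ring
  have e21 : (g:M4) 2 1 = 2 * (A 2 1 : ℚ) := by
    rw [hA 2 1, show qexp 2 1 = 1 by decide]; norm_num <;> ring
  have e30 : (g:M4) 3 0 = 2 * (A 3 0 : ℚ) := by
    rw [hA 3 0, show qexp 3 0 = 1 by decide]; norm_num <;> ring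
  have e31 : (g:M4) 3 1 = 2 * (A 3 1 : ℚ) := by
    rw [hA 3 1, show qexp 3 1 = 1 by decide]; norm_num <;> ring
  have e32 : (g:M4) 3 2 = 2 * (A 3 2 : ℚ) := by
    rw [hA 3 2, show qexp 3 2 = 1 by decide]; norm_num <;> ring
  have e33 : (g:M4) 3 3 = (A 3 3 : ℚ) := by
    rw [hA 3 3, show qexp 3 3 = 0 by decide]; norm_num
  -- the symplectic relation between rows 1 and 3
  have h13 := congrFun (congrFun (symp_row g hsymp) 1) 3
  simp [Matrix.mul_apply, Fin.sum_univ_four, Jmat, Matrix.transpose_apply] at h13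
  rw [e10, e11, e12, e13, e30, e31, e32, e33] at h13
  have hint : 2*(A 1 0)*(A 3 2) + (A 1 1)*(A 3 3) - 2*(A 1 2)*(A 3 0) - (A 1 3)*(A 3 1)
      = (1:ℤ) := by
    have hq : (((2*(A 1 0)*(A 3 2) + (A 1 1)*(A 3 3) - 2*(A 1 2)*(A 3 0)
        - (A 1 3)*(A 3 1) : ℤ)):ℚ) = 1 := by
      push_cast
      linear_combination h13
    exact_mod_cast hq
  -- product values
  have hS2val : ((g * S2⁻¹ : GL (Fin 4) ℚ) : M4)
      = (g:M4) * !![1,0,0,0; 0,1,0,-(1/2); 0,0,1,0; 0,0,0,1] := by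
    rw [Units.val_mul]; rfl
  have hJ2val : ((g * J2⁻¹ : GL (Fin 4) ℚ) : M4)
      = (g:M4) * !![0,0,1,0; 0,0,0,1/2; -1,0,0,0; 0,-2,0,0] := by
    rw [Units.val_mul]; rfl
  have h1val : ((g * (1:GL (Fin 4) ℚ)⁻¹ : GL (Fin 4) ℚ) : M4) = (g:M4) := by
    rw [inv_one, mul_one]
  have pS13 : ((g * S2⁻¹ : GL (Fin 4) ℚ) : M4) 1 3 = ((A 1 3 : ℚ) - (A 1 1))/2 := by
    rw [hS2val, Matrix.mul_apply, Fin.sum_univ_four]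
    simp [e11, e13, Matrix.vecHead, Matrix.vecTail]
    ring
  have pJ13 : ((g * J2⁻¹ : GL (Fin 4) ℚ) : M4) 1 3 = (A 1 1 : ℚ)/2 := by
    rw [hJ2val, Matrix.mul_apply, Fin.sum_univ_four]
    simp [e11, Matrix.vecHead, Matrix.vecTail]
    ring
  -- refutation helpers
  have ref1 : g * (1:GL (Fin 4) ℚ)⁻¹ ∈ Gamma' 2 two_ne ⊓ Sp4Z → ∃ n:ℤ, A 1 3 = 2*n := by
    intro h
    obtain ⟨n, hn⟩ := sp4z_intM (Subgroup.mem_inf.mp h).2 1 3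
    rw [h1val, e13] at hn
    refine ⟨n, ?_⟩
    have h2 : (A 1 3 : ℚ) = 2*n := by linarith
    exact_mod_cast h2
  have refS : g * S2⁻¹ ∈ Gamma' 2 two_ne ⊓ Sp4Z → ∃ n:ℤ, A 1 3 - A 1 1 = 2*n := by
    intro h
    obtain ⟨n, hn⟩ := sp4z_intM (Subgroup.mem_inf.mp h).2 1 3
    rw [pS13] at hn
    refine ⟨n, ?_⟩
    have h2 : (A 1 3 : ℚ) - (A 1 1) = 2*n := by linarith
    exact_mod_cast h2
  have refJ : g * J2⁻¹ ∈ Gamma' 2 two_ne ⊓ Sp4Z → ∃ n:ℤ, A 1 1 = 2*n := by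
    intro h
    obtain ⟨n, hn⟩ := sp4z_intM (Subgroup.mem_inf.mp h).2 1 3
    rw [pJ13] at hn
    refine ⟨n, ?_⟩
    have h2 : (A 1 1 : ℚ) = 2*n := by linarith
    exact_mod_cast h2
  rcases Int.even_or_odd (A 1 3) with hEa | hOa
  · -- case rep = 1 : A 1 3 even, then A 1 1 odd
    have hOm : Odd (A 1 1) := by
      rcases Int.even_or_odd (A 1 1) with hEm | hOm
      · exfalso
        obtain ⟨a0, ha0⟩ := hEa
        obtain ⟨m0, hm0⟩ := hEm
        rw [ha0, hm0] at hint
        have h2 : (1:ℤ) = 2 * ((A 1 0)*(A 3 2) + (A 3 3)*m0 - (A 1 2)*(A 3 0) - (A 3 1)*a0) := by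
          linear_combination -hint
        omega
      · exact hOm
    have hIg : IntM ((g * (1:GL (Fin 4) ℚ)⁻¹ : GL (Fin 4) ℚ) : M4) := by
      rw [h1val]
      intro i j
      rcases qcase i j with hq | ⟨rfl, rfl⟩
      · exact int_of_pow _ _ _ (hA i j) hq
      · obtain ⟨a0, ha0⟩ := hEa
        exact ⟨a0, by rw [e13, ha0]; push_cast; ring⟩
    refine ⟨1, ⟨Or.inl rfl, mem_inf_helper hg one_mem_gamma' hIg⟩, ?_⟩
    rintro r' ⟨(rfl | rfl | rfl), hmem⟩
    · rfl
    · exfalso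
      obtain ⟨n, hn⟩ := refS hmem
      obtain ⟨a0, ha0⟩ := hEa
      obtain ⟨m0, hm0⟩ := hOm
      omega
    · exfalso
      obtain ⟨n, hn⟩ := refJ hmem
      obtain ⟨m0, hm0⟩ := hOm
      omega
  · rcases Int.even_or_odd (A 1 1) with hEm | hOm
    · -- case rep = J2 : A 1 3 odd, A 1 1 even
      have hIJ : IntM ((g * J2⁻¹ : GL (Fin 4) ℚ) : M4) := by
        intro i j
        rcases fin4_cases j with rfl | rfl | rfl | rfl
        · have hval : ((g * J2⁻¹ : GL (Fin 4) ℚ) : M4) i 0 = -((g:M4) i 2) := by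
            rw [hJ2val, Matrix.mul_apply, Fin.sum_univ_four]; simp [Matrix.vecHead, Matrix.vecTail]
          obtain ⟨n, hn⟩ := int_of_pow _ _ _ (hA i 2) (by rcases fin4_cases i with rfl|rfl|rfl|rfl <;> decide)
          exact ⟨-n, by rw [hval, hn]; push_cast; ring⟩
        · have hval : ((g * J2⁻¹ : GL (Fin 4) ℚ) : M4) i 1 = (g:M4) i 3 * (-2) := by
            rw [hJ2val, Matrix.mul_apply, Fin.sum_univ_four]; simp [Matrix.vecHead, Matrix.vecTail]
          rcases qcase i 3 with hq | ⟨rfl, -⟩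
          · obtain ⟨n, hn⟩ := int_of_pow _ _ _ (hA i 3) hq
            exact ⟨-2*n, by rw [hval, hn]; push_cast; ring⟩
          · exact ⟨-(A 1 3), by rw [hval, e13]; push_cast; ring⟩
        · have hval : ((g * J2⁻¹ : GL (Fin 4) ℚ) : M4) i 2 = (g:M4) i 0 := by
            rw [hJ2val, Matrix.mul_apply, Fin.sum_univ_four]; simp [Matrix.vecHead, Matrix.vecTail]
          obtain ⟨n, hn⟩ := int_of_pow _ _ _ (hA i 0) (by rcases fin4_cases i with rfl|rfl|rfl|rfl <;> decide)
          exact ⟨n, by rw [hval, hn]⟩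
        · have hval : ((g * J2⁻¹ : GL (Fin 4) ℚ) : M4) i 3 = (g:M4) i 1 * (1/2) := by
            rw [hJ2val, Matrix.mul_apply, Fin.sum_univ_four]; simp [Matrix.vecHead, Matrix.vecTail]
          rcases fin4_cases i with rfl | rfl | rfl | rfl
          · exact ⟨A 0 1, by rw [hval, e01]; push_cast; ring⟩
          · obtain ⟨m0, hm0⟩ := hEm
            exact ⟨m0, by rw [hval, e11, hm0]; push_cast; ring⟩
          · exact ⟨A 2 1, by rw [hval, e21]; push_cast; ring⟩
          · exact ⟨A 3 1, by rw [hval, e31]; push_cast; ring⟩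
      refine ⟨J2, ⟨Or.inr (Or.inr rfl), mem_inf_helper hg J2_mem_gamma' hIJ⟩, ?_⟩
      rintro r' ⟨(rfl | rfl | rfl), hmem⟩
      · exfalso
        obtain ⟨n, hn⟩ := ref1 hmem
        obtain ⟨a0, ha0⟩ := hOa
        omega
      · exfalso
        obtain ⟨n, hn⟩ := refS hmem
        obtain ⟨a0, ha0⟩ := hOa
        obtain ⟨m0, hm0⟩ := hEm
        omega
      · rfl
    · -- case rep = S2 : A 1 3 odd, A 1 1 odd
      have hIS : IntM ((g * S2⁻¹ : GL (Fin 4) ℚ) : M4) := by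
        intro i j
        rcases fin4_cases j with rfl | rfl | rfl | rfl
        · have hval : ((g * S2⁻¹ : GL (Fin 4) ℚ) : M4) i 0 = (g:M4) i 0 := by
            rw [hS2val, Matrix.mul_apply, Fin.sum_univ_four]; simp [Matrix.vecHead, Matrix.vecTail]
          obtain ⟨n, hn⟩ := int_of_pow _ _ _ (hA i 0) (by rcases fin4_cases i with rfl|rfl|rfl|rfl <;> decide)
          exact ⟨n, by rw [hval, hn]⟩
        · have hval : ((g * S2⁻¹ : GL (Fin 4) ℚ) : M4) i 1 = (g:M4) i 1 := by
            rw [hS2val, Matrix.mul_apply, Fin.sum_univ_four]; simp [Matrix.vecHead, Matrix.vecTail]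
          obtain ⟨n, hn⟩ := int_of_pow _ _ _ (hA i 1) (by rcases fin4_cases i with rfl|rfl|rfl|rfl <;> decide)
          exact ⟨n, by rw [hval, hn]⟩
        · have hval : ((g * S2⁻¹ : GL (Fin 4) ℚ) : M4) i 2 = (g:M4) i 2 := by
            rw [hS2val, Matrix.mul_apply, Fin.sum_univ_four]; simp [Matrix.vecHead, Matrix.vecTail]
          obtain ⟨n, hn⟩ := int_of_pow _ _ _ (hA i 2) (by rcases fin4_cases i with rfl|rfl|rfl|rfl <;> decide)
          exact ⟨n, by rw [hval, hn]⟩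
        · have hval : ((g * S2⁻¹ : GL (Fin 4) ℚ) : M4) i 3
              = (g:M4) i 3 - (g:M4) i 1 * (1/2) := by
            rw [hS2val, Matrix.mul_apply, Fin.sum_univ_four]; simp [Matrix.vecHead, Matrix.vecTail]; ring
          rcases fin4_cases i with rfl | rfl | rfl | rfl
          · obtain ⟨n, hn⟩ := int_of_pow _ _ _ (hA 0 3) (by decide)
            exact ⟨n - A 0 1, by rw [hval, hn, e01]; push_cast; ring⟩
          · obtain ⟨a0, ha0⟩ := hOa
            obtain ⟨m0, hm0⟩ := hOm
            exact ⟨a0 - m0, by rw [hval, e13, e11, ha0, hm0]; push_cast; ring⟩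
          · obtain ⟨n, hn⟩ := int_of_pow _ _ _ (hA 2 3) (by decide)
            exact ⟨n - A 2 1, by rw [hval, hn, e21]; push_cast; ring⟩
          · obtain ⟨n, hn⟩ := int_of_pow _ _ _ (hA 3 3) (by decide)
            exact ⟨n - A 3 1, by rw [hval, hn, e31]; push_cast; ring⟩
      refine ⟨S2, ⟨Or.inr (Or.inl rfl), mem_inf_helper hg S2_mem_gamma' hIS⟩, ?_⟩
      rintro r' ⟨(rfl | rfl | rfl), hmem⟩
      · exfalso
        obtain ⟨n, hn⟩ := ref1 hmem
        obtain ⟨a0, ha0⟩ := hOa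
        omega
      · rfl
      · exfalso
        obtain ⟨n, hn⟩ := refJ hmem
        obtain ⟨m0, hm0⟩ := hOm
        omega

lemma one_ne_S2 : (1 : GL (Fin 4) ℚ) ≠ S2 := by
  intro h
  have h2 := congrArg (fun u : GL (Fin 4) ℚ => (u : M4) 1 3) h
  simp only [Units.val_one] at h2
  rw [Matrix.one_apply_ne (by decide)] at h2
  simp [S2] at h2

lemma one_ne_J2 : (1 : GL (Fin 4) ℚ) ≠ J2 := by
  intro h
  have h2 := congrArg (fun u : GL (Fin 4) ℚ => (u : M4) 1 3) h
  simp only [Units.val_one] at h2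
  rw [Matrix.one_apply_ne (by decide)] at h2
  simp [J2] at h2

lemma S2_ne_J2 : S2 ≠ J2 := by
  intro h
  have h2 := congrArg (fun u : GL (Fin 4) ℚ => (u : M4) 0 0) h
  norm_num [S2, J2] at h2

def repsG : Fin 3 → ↥(Gamma' 2 two_ne) :=
  ![⟨1, one_mem_gamma'⟩, ⟨S2, S2_mem_gamma'⟩, ⟨J2, J2_mem_gamma'⟩]

lemma repsG_coe0 : ((repsG 0 : ↥(Gamma' 2 two_ne)) : GL (Fin 4) ℚ) = 1 := rfl
lemma repsG_coe1 : ((repsG 1 : ↥(Gamma' 2 two_ne)) : GL (Fin 4) ℚ) = S2 := rfl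
lemma repsG_coe2 : ((repsG 2 : ↥(Gamma' 2 two_ne)) : GL (Fin 4) ℚ) = J2 := rfl

lemma repsG_or (i : Fin 3) : ((repsG i : ↥(Gamma' 2 two_ne)) : GL (Fin 4) ℚ) = 1 ∨
    ((repsG i : ↥(Gamma' 2 two_ne)) : GL (Fin 4) ℚ) = S2 ∨
    ((repsG i : ↥(Gamma' 2 two_ne)) : GL (Fin 4) ℚ) = J2 := by
  fin_cases i
  · exact Or.inl rfl
  · exact Or.inr (Or.inl rfl)
  · exact Or.inr (Or.inr rfl)

lemma repsG_inj {i j : Fin 3}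
    (h : ((repsG i : ↥(Gamma' 2 two_ne)) : GL (Fin 4) ℚ)
       = ((repsG j : ↥(Gamma' 2 two_ne)) : GL (Fin 4) ℚ)) : i = j := by
  fin_cases i <;> fin_cases j
  · rfl
  · exact absurd h one_ne_S2
  · exact absurd h one_ne_J2
  · exact absurd h.symm one_ne_S2
  · rfl
  · exact absurd h S2_ne_J2
  · exact absurd h.symm one_ne_J2
  · exact absurd h.symm S2_ne_J2
  · rfl

lemma index_three :
    ((Gamma' 2 two_ne ⊓ Sp4Z).subgroupOf (Gamma' 2 two_ne)).index = 3 := by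
  have hinj : Function.Injective
      (fun i : Fin 3 => (QuotientGroup.mk ((repsG i)⁻¹) :
        ↥(Gamma' 2 two_ne) ⧸ (Gamma' 2 two_ne ⊓ Sp4Z).subgroupOf (Gamma' 2 two_ne))) := by
    intro i j hij
    have hmem : ((repsG i)⁻¹)⁻¹ * (repsG j)⁻¹
        ∈ (Gamma' 2 two_ne ⊓ Sp4Z).subgroupOf (Gamma' 2 two_ne) := (QuotientGroup.eq).mp hij
    rw [inv_inv, Subgroup.mem_subgroupOf] at hmem
    have hmem2 : ((repsG i : ↥(Gamma' 2 two_ne)) : GL (Fin 4) ℚ)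
        * ((repsG j : ↥(Gamma' 2 two_ne)) : GL (Fin 4) ℚ)⁻¹ ∈ Gamma' 2 two_ne ⊓ Sp4Z := hmem
    obtain ⟨r, hr, hruniq⟩ :=
      exists_unique_rep ((repsG i : ↥(Gamma' 2 two_ne)) : GL (Fin 4) ℚ) (repsG i).2
    have h1 : ((repsG j : ↥(Gamma' 2 two_ne)) : GL (Fin 4) ℚ) = r :=
      hruniq _ ⟨repsG_or j, hmem2⟩
    have h2 : ((repsG i : ↥(Gamma' 2 two_ne)) : GL (Fin 4) ℚ) = r := by
      refine hruniq _ ⟨repsG_or i, ?_⟩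
      rw [mul_inv_cancel]
      exact Subgroup.one_mem _
    exact repsG_inj (h2.trans h1.symm)
  have hsurj : Function.Surjective
      (fun i : Fin 3 => (QuotientGroup.mk ((repsG i)⁻¹) :
        ↥(Gamma' 2 two_ne) ⧸ (Gamma' 2 two_ne ⊓ Sp4Z).subgroupOf (Gamma' 2 two_ne))) := by
    intro q
    induction q using QuotientGroup.induction_on with
    | H x =>
      have hxinv : ((x : GL (Fin 4) ℚ))⁻¹ ∈ Gamma' 2 two_ne := inv_mem x.2
      obtain ⟨r, ⟨hr_or, hmem⟩, -⟩ := exists_unique_rep ((x : GL (Fin 4) ℚ))⁻¹ hxinv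
      have hex : ∃ i : Fin 3, ((repsG i : ↥(Gamma' 2 two_ne)) : GL (Fin 4) ℚ) = r := by
        rcases hr_or with rfl | rfl | rfl
        · exact ⟨0, rfl⟩
        · exact ⟨1, rfl⟩
        · exact ⟨2, rfl⟩
      obtain ⟨i, hi⟩ := hex
      refine ⟨i, ?_⟩
      show QuotientGroup.mk ((repsG i)⁻¹) = QuotientGroup.mk x
      rw [QuotientGroup.eq, inv_inv, Subgroup.mem_subgroupOf]
      have hmm : ((x : GL (Fin 4) ℚ))⁻¹ * r⁻¹ ∈ Gamma' 2 two_ne ⊓ Sp4Z := hmem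
      have h2 := inv_mem hmm
      rw [_root_.mul_inv_rev, inv_inv, inv_inv] at h2
      show ((repsG i : ↥(Gamma' 2 two_ne)) : GL (Fin 4) ℚ) * (x : GL (Fin 4) ℚ)
          ∈ Gamma' 2 two_ne ⊓ Sp4Z
      rw [hi]
      exact h2
  show Nat.card (↥(Gamma' 2 two_ne) ⧸ (Gamma' 2 two_ne ⊓ Sp4Z).subgroupOf (Gamma' 2 two_ne)) = 3
  rw [Nat.card_eq_of_equiv_fin (Equiv.ofBijective _ ⟨hinj, hsurj⟩).symm]

/-- `₀Γ'₂ = Γ'₂ ∩ Sp(4,ℤ)` has index `3` in `Γ'₂`, and the three matrices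
`1`, `S₂` and `J₂` form a complete system of representatives for the left cosets
`₀Γ'₂ \ Γ'₂`: they lie in `Γ'₂`, are pairwise distinct, and every element of `Γ'₂` lies in
exactly one coset `₀Γ'₂ · r` with `r ∈ {1, S₂, J₂}`. -/
theorem coset_representatives_gammaPrimeTwo :
    ((1 : GL (Fin 4) ℚ) ∈ Gamma' 2 (by norm_num) ∧
        S2 ∈ Gamma' 2 (by norm_num) ∧ J2 ∈ Gamma' 2 (by norm_num)) ∧
      ((1 : GL (Fin 4) ℚ) ≠ S2 ∧ (1 : GL (Fin 4) ℚ) ≠ J2 ∧ S2 ≠ J2) ∧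
      (((Gamma' 2 (by norm_num) ⊓ Sp4Z).subgroupOf (Gamma' 2 (by norm_num))).index = 3) ∧
      (∀ g ∈ Gamma' 2 (by norm_num), ∃! r : GL (Fin 4) ℚ,
        (r = 1 ∨ r = S2 ∨ r = J2) ∧ g * r⁻¹ ∈ Gamma' 2 (by norm_num) ⊓ Sp4Z) := by
  refine ⟨⟨one_mem_gamma', S2_mem_gamma', J2_mem_gamma'⟩,
    ⟨one_ne_S2, one_ne_J2, S2_ne_J2⟩, index_three, fun g hg => exists_unique_rep g hg⟩

end
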